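/- Let 𝒳 ⊆ 𝒮 be full additive subcategories of an abelian category 𝒜 with 𝒮 closed under direct summands. For D a bounded-above complex with components in 𝒳 and S a bounded-above complex with components in 𝒮, the localization functor induces an isomorphism of abelian groups Hom_{K^-(𝒮)}(D, S) ≅ Hom_{D^-_𝒳(𝒮)}(D, S), where D^-_𝒳(𝒮) is the Verdier quotient of K^-(𝒮) by the thick subcategory of 𝒳-acyclic complexes. -/

import Mathlib

open CategoryTheory Limits

universe v u

variable {A : Type u} [Category.{v} A] [Abelian A]

/-- A complex `S` is `𝒳`-acyclic if `Hom_𝒜(X, S)` is acyclic for every `X ∈ 𝒳`. -/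
def XAcyclic (𝒳 : Set A) (S : CochainComplex A ℤ) : Prop :=
  ∀ X ∈ 𝒳, ∀ n : ℤ,
    ((((preadditiveCoyoneda.obj (Opposite.op X)).mapHomologicalComplex
      (ComplexShape.up ℤ)).obj S)).ExactAt n

/-- The objects of the bounded-above homotopy category `K^-(𝒮)`, realized as a full
subcategory of the homotopy category of `𝒜`: complexes with components in `𝒮` which are
bounded above. -/
def KminusP (𝒮 : Set A) (K : HomotopyCategory A (ComplexShape.up ℤ)) : Prop :=
  (∀ n : ℤ, K.1.X n ∈ 𝒮) ∧ ∃ b : ℤ, ∀ i : ℤ, b < i → IsZero (K.1.X i)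

/-- The class of `𝒳`-quasi-isomorphisms in `K^-(𝒮)` (the saturated multiplicative system
corresponding to the thick subcategory of `𝒳`-acyclic complexes): morphisms `f` such that
`Hom_𝒜(X, f)` induces isomorphisms on all homology groups for every `X ∈ 𝒳`.
The Verdier quotient `D^-_𝒳(𝒮) = K^-(𝒮)/K^-_𝒳(𝒮)` is the localization of `K^-(𝒮)` at this
class of morphisms. -/
def WXQuasiIso (𝒳 𝒮 : Set A) : MorphismProperty (ObjectProperty.FullSubcategory (KminusP 𝒮)) :=
  fun _ _ f => ∀ X ∈ 𝒳, ∀ n : ℤ,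
    IsIso ((HomotopyCategory.homologyFunctor AddCommGrpCat (ComplexShape.up ℤ) n).map
      (((preadditiveCoyoneda.obj (Opposite.op X)).mapHomotopyCategory
        (ComplexShape.up ℤ)).map ((ObjectProperty.ι (KminusP 𝒮)).map f)))

lemma XAcyclic.lift {𝒳 : Set A} {C : CochainComplex A ℤ} (hC : XAcyclic 𝒳 C)
    {X : A} (hX : X ∈ 𝒳) (n : ℤ) (g : X ⟶ C.X n) (hg : g ≫ C.d n (n + 1) = 0) :
    ∃ s : X ⟶ C.X (n - 1), s ≫ C.d (n - 1) n = g := by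
  have h := hC X hX n
  rw [HomologicalComplex.exactAt_iff' _ (n-1) n (n+1) (by simp) (by simp)] at h
  obtain ⟨s, hs⟩ := (ShortComplex.ab_exact_iff _).1 h g hg
  exact ⟨s, hs⟩

noncomputable def nullHomotopyAux {𝒳 : Set A} {D C : CochainComplex A ℤ}
    (hD : ∀ n : ℤ, D.X n ∈ 𝒳) (b : ℤ) (hb : ∀ i : ℤ, b < i → IsZero (D.X i))
    (hC : XAcyclic 𝒳 C) (f : D ⟶ C) (n : ℤ) :
    {p : (D.X n ⟶ C.X (n - 1)) × (D.X (n + 1) ⟶ C.X n) //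
      f.f n = D.d n (n + 1) ≫ p.2 + p.1 ≫ C.d (n - 1) n} :=
  if h : b < n then
    ⟨(0, 0), by
      have h1 : f.f n = 0 := (hb n h).eq_of_src _ _
      simp [h1]⟩
  else
    let q := nullHomotopyAux hD b hb hC f (n + 1)
    let σ : D.X (n + 1) ⟶ C.X n := q.1.1 ≫ (C.XIsoOfEq (by omega : n + 1 - 1 = n)).hom
    have hcyc : (f.f n - D.d n (n + 1) ≫ σ) ≫ C.d n (n + 1) = 0 := by
      have hq := q.2
      have hcomm : f.f n ≫ C.d n (n + 1) = D.d n (n + 1) ≫ f.f (n + 1) :=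
        f.comm' n (n + 1) (by simp)
      have : σ ≫ C.d n (n + 1) = q.1.1 ≫ C.d (n + 1 - 1) (n + 1) := by
        simp [σ, HomologicalComplex.XIsoOfEq_hom_comp_d]
      simp only [Preadditive.sub_comp, Category.assoc, hcomm, this, hq,
        Preadditive.comp_add]
      simp [HomologicalComplex.d_comp_d_assoc]
    ⟨((hC.lift (hD n) n _ hcyc).choose, σ), by
      have hs := (hC.lift (hD n) n _ hcyc).choose_spec
      rw [hs]; abel⟩
termination_by (b + 1 - n).toNat
decreasing_by omega

lemma nullHomotopyAux_consistent {𝒳 : Set A} {D C : CochainComplex A ℤ}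
    (hD : ∀ n : ℤ, D.X n ∈ 𝒳) (b : ℤ) (hb : ∀ i : ℤ, b < i → IsZero (D.X i))
    (hC : XAcyclic 𝒳 C) (f : D ⟶ C) (n : ℤ) :
    (nullHomotopyAux hD b hb hC f n).1.2 =
      (nullHomotopyAux hD b hb hC f (n + 1)).1.1 ≫
        (C.XIsoOfEq (by omega : n + 1 - 1 = n)).hom := by
  rw [nullHomotopyAux]
  split
  · next h =>
    rw [nullHomotopyAux]
    rw [dif_pos (by omega : b < n + 1)]
    simp
  · rfl

noncomputable def nullHomotopy {𝒳 : Set A} {D C : CochainComplex A ℤ}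
    (hD : ∀ n : ℤ, D.X n ∈ 𝒳) (b : ℤ) (hb : ∀ i : ℤ, b < i → IsZero (D.X i))
    (hC : XAcyclic 𝒳 C) (f : D ⟶ C) : Homotopy f 0 where
  hom i j :=
    if h : j = i - 1 then
      (nullHomotopyAux hD b hb hC f i).1.1 ≫ (C.XIsoOfEq h.symm).hom
    else 0
  zero i j hij := dif_neg (fun h => hij (by simp [h]))
  comm i := by
    rw [dNext_eq _ (show (ComplexShape.up ℤ).Rel i (i + 1) by simp),
      prevD_eq _ (show (ComplexShape.up ℤ).Rel (i - 1) i from by simp)]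
    rw [dif_pos (by omega : i = i + 1 - 1), dif_pos rfl]
    have hcons := nullHomotopyAux_consistent hD b hb hC f i
    have h2 := (nullHomotopyAux hD b hb hC f i).2
    simp only [HomologicalComplex.XIsoOfEq_rfl, Iso.refl_hom, Category.comp_id]
    conv_lhs => rw [h2, hcons]
    simp

lemma XAcyclic.shift {𝒳 : Set A} {C : CochainComplex A ℤ} (hC : XAcyclic 𝒳 C) (k : ℤ) :
    XAcyclic 𝒳 (C⟦k⟧) := by
  intro X hX n
  rw [HomologicalComplex.exactAt_iff' _ (n-1) n (n+1) (by simp) (by simp)]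
  rw [ShortComplex.ab_exact_iff]
  intro g hg
  -- g : X ⟶ (C⟦k⟧).X n = C.X (n + k)
  change X ⟶ C.X (n + k) at g
  have hg' : g ≫ C.d (n + k) (n + k + 1) = 0 := by
    have : g ≫ ((C⟦k⟧).d n (n+1)) = 0 := hg
    rw [CochainComplex.shiftFunctor_obj_d'] at this
    rw [show n + k + 1 = n + 1 + k by ring]
    have h3 : k.negOnePow • (g ≫ C.d (n + k) (n + 1 + k)) = 0 := by
      rw [← Linear.comp_units_smul]; exact this
    have h2 := congrArg (fun y => k.negOnePow • y) h3
    simpa [smul_smul, Int.units_mul_self] using h2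
  obtain ⟨s, hs⟩ := hC.lift hX (n + k) g hg'
  refine ⟨k.negOnePow • (s ≫ (C.XIsoOfEq (by omega : n + k - 1 = n - 1 + k)).hom), ?_⟩
  show (k.negOnePow • (s ≫ _)) ≫ ((C⟦k⟧).d (n-1) n) = g
  rw [CochainComplex.shiftFunctor_obj_d']
  erw [Linear.units_smul_comp, Linear.comp_units_smul, smul_smul, Int.units_mul_self, one_smul,
    Category.assoc, HomologicalComplex.XIsoOfEq_hom_comp_d, hs]

lemma hom_quotient_eq_zero {𝒳 : Set A} {D C : CochainComplex A ℤ}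
    (hD : ∀ n : ℤ, D.X n ∈ 𝒳) (b : ℤ) (hb : ∀ i : ℤ, b < i → IsZero (D.X i))
    (hC : XAcyclic 𝒳 C)
    (φ : (HomotopyCategory.quotient A (ComplexShape.up ℤ)).obj D ⟶
      (HomotopyCategory.quotient A (ComplexShape.up ℤ)).obj C) : φ = 0 := by
  obtain ⟨f, rfl⟩ := (HomotopyCategory.quotient A _).map_surjective φ
  rw [HomotopyCategory.eq_of_homotopy f 0 (nullHomotopy hD b hb hC f), Functor.map_zero]

lemma cone_XAcyclic {𝒳 : Set A} {Y Z : CochainComplex A ℤ} (w₀ : Y ⟶ Z)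
    (hw : ∀ X ∈ 𝒳, ∀ n : ℤ,
      IsIso ((HomotopyCategory.homologyFunctor AddCommGrpCat (ComplexShape.up ℤ) n).map
        (((preadditiveCoyoneda.obj (Opposite.op X)).mapHomotopyCategory
          (ComplexShape.up ℤ)).map
            ((HomotopyCategory.quotient A (ComplexShape.up ℤ)).map w₀)))) :
    XAcyclic 𝒳 (CochainComplex.mappingCone w₀) := by
  intro X hX n
  set F := preadditiveCoyoneda.obj (Opposite.op X) with hF
  set φ := (F.mapHomologicalComplex (ComplexShape.up ℤ)).map w₀ with hφ
  have hiso : ∀ m : ℤ, IsIso ((HomotopyCategory.homologyFunctor AddCommGrpCat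
      (ComplexShape.up ℤ) m).map
      ((HomotopyCategory.quotient AddCommGrpCat (ComplexShape.up ℤ)).map φ)) := by
    intro m
    exact hw X hX m
  have hqis : HomotopyCategory.quasiIso AddCommGrpCat (ComplexShape.up ℤ)
      ((HomotopyCategory.quotient AddCommGrpCat (ComplexShape.up ℤ)).map φ) := hiso
  rw [HomotopyCategory.quasiIso_eq_subcategoryAcyclic_W] at hqis
  have hd := HomotopyCategory.mappingCone_triangleh_distinguished φ
  have hP : (HomotopyCategory.subcategoryAcyclic AddCommGrpCat)
      ((HomotopyCategory.quotient AddCommGrpCat (ComplexShape.up ℤ)).obj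
        (CochainComplex.mappingCone φ)) := by
    have := ((HomotopyCategory.subcategoryAcyclic
      AddCommGrpCat).trW_iff_of_distinguished _ hd).1 hqis
    exact this
  rw [HomotopyCategory.quotient_obj_mem_subcategoryAcyclic_iff_exactAt] at hP
  have e2 := CochainComplex.mappingCone.mapHomologicalComplexIso w₀ F
  rw [HomologicalComplex.exactAt_iff_isZero_homology]
  exact IsZero.of_iso ((HomologicalComplex.exactAt_iff_isZero_homology _ _).1 (hP n))
    ((HomologicalComplex.homologyFunctor _ _ n).mapIso e2)

open Pretriangulated in
lemma bij_postcomp {𝒳 : Set A} {D Y Z : CochainComplex A ℤ}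
    (hD : ∀ n : ℤ, D.X n ∈ 𝒳) (b : ℤ) (hb : ∀ i : ℤ, b < i → IsZero (D.X i))
    (w : (HomotopyCategory.quotient A (ComplexShape.up ℤ)).obj Y ⟶
         (HomotopyCategory.quotient A (ComplexShape.up ℤ)).obj Z)
    (hw : ∀ X ∈ 𝒳, ∀ n : ℤ,
      IsIso ((HomotopyCategory.homologyFunctor AddCommGrpCat (ComplexShape.up ℤ) n).map
        (((preadditiveCoyoneda.obj (Opposite.op X)).mapHomotopyCategory
          (ComplexShape.up ℤ)).map w))) :
    Function.Bijective
      (fun g : (HomotopyCategory.quotient A (ComplexShape.up ℤ)).obj D ⟶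
        (HomotopyCategory.quotient A (ComplexShape.up ℤ)).obj Y => g ≫ w) := by
  obtain ⟨w₀, rfl⟩ := (HomotopyCategory.quotient A _).map_surjective w
  have hac := cone_XAcyclic w₀ hw
  have hd := HomotopyCategory.mappingCone_triangleh_distinguished w₀
  set T := CochainComplex.mappingCone.triangleh w₀ with hT
  constructor
  · intro g₁ g₂ h
    rw [← sub_eq_zero]
    have hg : (g₁ - g₂) ≫ T.invRotate.mor₂ = 0 := by
      change (g₁ - g₂) ≫ (HomotopyCategory.quotient A (ComplexShape.up ℤ)).map w₀ = 0
      have : T.mor₁ = (HomotopyCategory.quotient A (ComplexShape.up ℤ)).map w₀ := rfl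
      rw [Preadditive.sub_comp, sub_eq_zero]
      exact h
    obtain ⟨h3, hh⟩ := Triangle.coyoneda_exact₂ _ (inv_rot_of_distTriang _ hd) (g₁ - g₂) hg
    have hze : h3 = 0 := by
      let eS := ((HomotopyCategory.quotient A (ComplexShape.up ℤ)).commShiftIso
        (-1 : ℤ)).app (CochainComplex.mappingCone w₀)
      have h4 : h3 ≫ eS.inv = 0 :=
        hom_quotient_eq_zero hD b hb (hac.shift (-1)) (h3 ≫ eS.inv)
      have : h3 = (h3 ≫ eS.inv) ≫ eS.hom := by erw [Category.assoc, Iso.inv_hom_id, Category.comp_id]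
      rw [this, h4, Limits.zero_comp]; rfl
    rw [hh, hze, Limits.zero_comp]; rfl
  · intro f
    have hf : f ≫ T.mor₂ = 0 :=
      hom_quotient_eq_zero hD b hb hac (f ≫ T.mor₂)
    obtain ⟨g, hg⟩ := Triangle.coyoneda_exact₂ T hd f hf
    exact ⟨g, hg.symm⟩

universe u₁ v₁

open Localization in
theorem bij_Q_map_of_local {C : Type u₁} [Category.{v₁} C] (W : MorphismProperty C) (D S : C)
    (hloc : ∀ ⦃Y Z : C⦄ (w : Y ⟶ Z), W w → Function.Bijective (fun g : D ⟶ Y => g ≫ w)) :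
    Function.Bijective (fun f : D ⟶ S => W.Q.map f) := by
  let G : C ⥤ Type (max u₁ v₁) := coyoneda.obj (Opposite.op D) ⋙ uliftFunctor.{u₁}
  have hG : W.IsInvertedBy G := by
    intro Y Z w hw
    rw [isIso_iff_bijective]
    have h : ⇑(G.map w) = fun g : ULift.{u₁} (D ⟶ Y) => ULift.up (g.down ≫ w) := rfl
    rw [h]
    exact Equiv.ulift.symm.bijective.comp ((hloc w hw).comp Equiv.ulift.bijective)
  let G' : W.Localization ⥤ Type (max u₁ v₁) := Localization.lift G hG W.Q
  let ι : W.Q ⋙ G' ≅ G := Localization.Lifting.iso W.Q W G G'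
  let H : W.Localization ⥤ Type (max u₁ v₁) := coyoneda.obj (Opposite.op (W.Q.obj D))
  let e : G'.obj (W.Q.obj D) := ι.inv.app D (ULift.up (𝟙 D))
  let τ : G ⟶ W.Q ⋙ H :=
    { app := fun Y => TypeCat.ofHom (fun g => W.Q.map g.down)
      naturality := fun Y Z f => by ext g; exact W.Q.map_comp g.down f }
  let τ' : G' ⟶ H := liftNatTrans W.Q W G (W.Q ⋙ H) G' H τ
  have hιD : ι.hom.app D e = ULift.up (𝟙 D) := ConcreteCategory.congr_hom (ι.inv_hom_id_app D) _
  have hτ'D : τ'.app (W.Q.obj D) e = 𝟙 (W.Q.obj D) := by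
    have h := ConcreteCategory.congr_hom (liftNatTrans_app W.Q W G (W.Q ⋙ H) G' H τ D) e
    dsimp [τ'] at h ⊢
    rw [h, show (Localization.Lifting.iso W.Q W G G').hom.app D e = ULift.up (𝟙 D) from hιD]
    exact W.Q.map_id D
  have hmain : ∀ (T : W.Localization) (φ : W.Q.obj D ⟶ T), τ'.app T (G'.map φ e) = φ := by
    intro T φ
    have h1 := ConcreteCategory.congr_hom (τ'.naturality φ) e
    dsimp at h1
    rw [h1, hτ'D]
    exact Category.id_comp φ
  constructor
  · intro f g hfg
    have hf := ConcreteCategory.congr_hom (ι.hom.naturality f) e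
    have hg := ConcreteCategory.congr_hom (ι.hom.naturality g) e
    dsimp [G] at hf hg
    have : ι.hom.app S (G'.map (W.Q.map f) e) = ι.hom.app S (G'.map (W.Q.map g) e) := by
      dsimp at hfg; rw [hfg]
    rw [hf, hg, hιD] at this
    have h5 : 𝟙 D ≫ f = 𝟙 D ≫ g := congrArg ULift.down this
    simpa using h5
  · intro φ
    refine ⟨(ι.hom.app S (G'.map φ e)).down, ?_⟩
    have h2 := hmain (W.Q.obj S) φ
    have h3 := ConcreteCategory.congr_hom (liftNatTrans_app W.Q W G (W.Q ⋙ H) G' H τ S) (G'.map φ e)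
    dsimp [τ'] at h2 h3
    rw [h3] at h2
    exact h2

/-- Lemma 3.7: for `𝒳 ⊆ 𝒮`, a bounded-above complex `D` with components in `𝒳` and a
bounded-above complex `S` with components in `𝒮`, the localization functor induces a
bijection `Hom_{K^-(𝒮)}(D, S) ≅ Hom_{D^-_𝒳(𝒮)}(D, S)`. -/
theorem stmt_5 (𝒳 𝒮 : Set A) (h𝒳𝒮 : 𝒳 ⊆ 𝒮)
    (hzero : ∀ Z : A, IsZero Z → Z ∈ 𝒳)
    (hsummand : ∀ X Y : A, (X ⊞ Y) ∈ 𝒮 → X ∈ 𝒮)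
    (D S : ObjectProperty.FullSubcategory (KminusP 𝒮))
    (hD : ∀ n : ℤ, D.1.1.X n ∈ 𝒳) :
    Function.Bijective (fun f : D ⟶ S => (WXQuasiIso 𝒳 𝒮).Q.map f) := by
  apply bij_Q_map_of_local
  intro Y Z w hw
  obtain ⟨b, hb⟩ := D.2.2
  have h := bij_postcomp hD b hb w.hom hw
  constructor
  · intro g₁ g₂ hg
    have hg' : (g₁ ≫ w).hom = (g₂ ≫ w).hom := congrArg (fun f : D ⟶ Z => f.hom) hg
    exact ObjectProperty.hom_ext _ (h.1 hg')
  · intro g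
    obtain ⟨g', hg'⟩ := h.2 g.hom
    exact ⟨ObjectProperty.homMk g', ObjectProperty.hom_ext _ hg'⟩
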